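/- Let u and v be adjacent vertices of a graph G and let G_{u,v,1} be obtained by adding a new vertex x adjacent exactly to u and v. Then γ(G) ≤ γ(G_{u,v,1}) ≤ γ(G) + 1, and γ(G_{u,v,1}) = γ(G) if and only if at least one of u, v belongs to some minimum dominating set of G. -/

import Mathlib

/-- `D` is a dominating set of `G`: every vertex not in `D` has a neighbor in `D`. -/
def isDomSet {V : Type*} (G : SimpleGraph V) (D : Finset V) : Prop :=
  ∀ v, v ∉ D → ∃ u ∈ D, G.Adj u v

/-- The domination number: minimum cardinality of a dominating set. -/
noncomputable def domNum {V : Type*} (G : SimpleGraph V) : ℕ :=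
  sInf {n | ∃ D : Finset V, D.card = n ∧ isDomSet G D}

/-- The `(u,v)`-path-addition graph `G_{u,v,k}`: add an internally disjoint path with
`k` internal vertices between `u` and `v`. -/
noncomputable def pathAdd {V : Type*} (G : SimpleGraph V) (u v : V) (k : ℕ) :
    SimpleGraph (V ⊕ Fin k) :=
  SimpleGraph.fromRel (fun a b =>
    match a, b with
    | Sum.inl x, Sum.inl y => G.Adj x y
    | Sum.inl x, Sum.inr i => (x = u ∧ (i : ℕ) = 0) ∨ (x = v ∧ (i : ℕ) = k - 1)
    | Sum.inr _, Sum.inl _ => False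
    | Sum.inr i, Sum.inr j => (j : ℕ) = (i : ℕ) + 1)

open Finset Sum

lemma domSet_univ {V : Type*} [Fintype V] (G : SimpleGraph V) : isDomSet G Finset.univ :=
  fun w hw => absurd (Finset.mem_univ w) hw

lemma domNum_le {V : Type*} [Fintype V] (G : SimpleGraph V) {D : Finset V}
    (hD : isDomSet G D) : domNum G ≤ D.card :=
  Nat.sInf_le ⟨D, rfl, hD⟩

lemma exists_domNum {V : Type*} [Fintype V] (G : SimpleGraph V) :
    ∃ D : Finset V, D.card = domNum G ∧ isDomSet G D :=
  Nat.sInf_mem (s := {n | ∃ D : Finset V, D.card = n ∧ isDomSet G D})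
    ⟨Finset.univ.card, Finset.univ, rfl, domSet_univ G⟩

lemma adj_inl_inl {V : Type*} (G : SimpleGraph V) (u v : V) {k : ℕ} (a b : V) :
    (pathAdd G u v k).Adj (inl a) (inl b) ↔ G.Adj a b := by
  simp only [pathAdd, SimpleGraph.fromRel_adj]
  constructor
  · rintro ⟨hne, hab | hba⟩
    · exact hab
    · exact hba.symm
  · intro hab
    exact ⟨by simpa using hab.ne, Or.inl hab⟩

lemma adj_inl_inr {V : Type*} (G : SimpleGraph V) (u v : V) (a : V) (i : Fin 1) :
    (pathAdd G u v 1).Adj (inl a) (inr i) ↔ a = u ∨ a = v := by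
  have hi : (i : ℕ) = 0 := by omega
  simp only [pathAdd, SimpleGraph.fromRel_adj]
  simp [hi]

lemma adj_inr_inr {V : Type*} (G : SimpleGraph V) (u v : V) (i j : Fin 1) :
    ¬ (pathAdd G u v 1).Adj (inr i) (inr j) := by
  have : i = j := Subsingleton.elim i j
  subst this
  exact (pathAdd G u v 1).loopless.irrefl _

/-- Key construction: from a dominating set of `pathAdd G u v 1`, produce one of `G`
no larger, containing `u` or `v`. -/
lemma key {V : Type*} [Fintype V] (G : SimpleGraph V) (u v : V) (h : G.Adj u v)
    (D : Finset (V ⊕ Fin 1)) (hdom : isDomSet (pathAdd G u v 1) D) :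
    ∃ D' : Finset V, isDomSet G D' ∧ D'.card ≤ D.card ∧ (u ∈ D' ∨ v ∈ D') := by
  classical
  set D₀ : Finset V := Finset.univ.filter (fun w => Sum.inl w ∈ D) with hD₀
  have hmemD₀ : ∀ w : V, w ∈ D₀ ↔ Sum.inl w ∈ D := by
    intro w; simp [hD₀]
  have himg : D₀.image Sum.inl ⊆ D := by
    intro a ha
    obtain ⟨w, hw, rfl⟩ := Finset.mem_image.1 ha
    exact (hmemD₀ w).1 hw
  have hcard₀ : D₀.card ≤ D.card := by
    calc D₀.card = (D₀.image Sum.inl).card :=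
          (Finset.card_image_of_injective _ Sum.inl_injective).symm
      _ ≤ D.card := Finset.card_le_card himg
  by_cases hx : Sum.inr (0 : Fin 1) ∈ D
  · refine ⟨insert u D₀, ?_, ?_, Or.inl (Finset.mem_insert_self u D₀)⟩
    · intro w hw
      have hwu : w ≠ u := fun e => hw (e ▸ Finset.mem_insert_self u D₀)
      have hw0 : w ∉ D₀ := fun e => hw (Finset.mem_insert_of_mem e)
      obtain ⟨a, haD, hadj⟩ := hdom (Sum.inl w) (fun e => hw0 ((hmemD₀ w).2 e))
      match a with
      | Sum.inl a' =>
        exact ⟨a', Finset.mem_insert_of_mem ((hmemD₀ a').2 haD),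
          (adj_inl_inl G u v a' w).1 hadj⟩
      | Sum.inr i =>
        have := (adj_inl_inr G u v w i).1 hadj.symm
        rcases this with rfl | rfl
        · exact absurd rfl hwu
        · exact ⟨u, Finset.mem_insert_self u D₀, h⟩
    · have hxnot : Sum.inr (0 : Fin 1) ∉ D₀.image Sum.inl := by
        simp
      have : (insert (Sum.inr (0 : Fin 1)) (D₀.image Sum.inl) : Finset (V ⊕ Fin 1)).card ≤ D.card := by
        apply Finset.card_le_card
        intro a ha
        rcases Finset.mem_insert.1 ha with rfl | ha
        · exact hx
        · exact himg ha
      rw [Finset.card_insert_of_notMem hxnot,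
        Finset.card_image_of_injective _ Sum.inl_injective] at this
      calc (insert u D₀).card ≤ D₀.card + 1 := Finset.card_insert_le _ _
        _ ≤ D.card := this
  · -- x ∉ D: x is dominated by inl u or inl v
    obtain ⟨a, haD, hadj⟩ := hdom (Sum.inr 0) hx
    have huv : u ∈ D₀ ∨ v ∈ D₀ := by
      match a with
      | Sum.inl a' =>
        rcases (adj_inl_inr G u v a' 0).1 hadj with rfl | rfl
        · exact Or.inl ((hmemD₀ a').2 haD)
        · exact Or.inr ((hmemD₀ a').2 haD)
      | Sum.inr i => exact absurd hadj (adj_inr_inr G u v i 0)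
    refine ⟨D₀, ?_, hcard₀, huv⟩
    intro w hw
    obtain ⟨a, haD, hadj⟩ := hdom (Sum.inl w) (fun e => hw ((hmemD₀ w).2 e))
    match a with
    | Sum.inl a' =>
      exact ⟨a', (hmemD₀ a').2 haD, (adj_inl_inl G u v a' w).1 hadj⟩
    | Sum.inr i =>
      have : i = (0 : Fin 1) := Subsingleton.elim _ _
      subst this
      exact absurd haD hx

theorem stmt6 {V : Type*} [Fintype V] (G : SimpleGraph V) (u v : V) (h : G.Adj u v) :
    domNum G ≤ domNum (pathAdd G u v 1) ∧
    domNum (pathAdd G u v 1) ≤ domNum G + 1 ∧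
    (domNum (pathAdd G u v 1) = domNum G ↔
      ∃ D : Finset V, isDomSet G D ∧ D.card = domNum G ∧ (u ∈ D ∨ v ∈ D)) := by
  classical
  have part1 : domNum G ≤ domNum (pathAdd G u v 1) := by
    obtain ⟨D, hcard, hdom⟩ := exists_domNum (pathAdd G u v 1)
    obtain ⟨D', hdom', hle, _⟩ := key G u v h D hdom
    calc domNum G ≤ D'.card := domNum_le G hdom'
      _ ≤ D.card := hle
      _ = _ := hcard
  refine ⟨part1, ?_, ?_⟩
  · obtain ⟨D, hcard, hdom⟩ := exists_domNum G
    have hdom' : isDomSet (pathAdd G u v 1) (insert (Sum.inr 0) (D.image Sum.inl)) := by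
      intro w hw
      match w with
      | Sum.inl a =>
        have haD : a ∉ D := by
          intro haD
          exact hw (Finset.mem_insert_of_mem (Finset.mem_image_of_mem _ haD))
        obtain ⟨b, hbD, hadj⟩ := hdom a haD
        exact ⟨Sum.inl b, Finset.mem_insert_of_mem (Finset.mem_image_of_mem _ hbD),
          (adj_inl_inl G u v b a).2 hadj⟩
      | Sum.inr i =>
        have : i = (0 : Fin 1) := Subsingleton.elim _ _
        subst this
        exact absurd (Finset.mem_insert_self _ _) hw
    calc domNum (pathAdd G u v 1) ≤ (insert (Sum.inr 0) (D.image Sum.inl)).card :=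
          domNum_le _ hdom'
      _ ≤ (D.image Sum.inl).card + 1 := Finset.card_insert_le _ _
      _ = D.card + 1 := by rw [Finset.card_image_of_injective _ Sum.inl_injective]
      _ = domNum G + 1 := by rw [hcard]
  · constructor
    · intro heq
      obtain ⟨D, hcard, hdom⟩ := exists_domNum (pathAdd G u v 1)
      obtain ⟨D', hdom', hle, huv⟩ := key G u v h D hdom
      have h1 : D'.card ≤ domNum G := by
        calc D'.card ≤ D.card := hle
          _ = domNum (pathAdd G u v 1) := hcard
          _ = domNum G := heq
      have h2 : domNum G ≤ D'.card := domNum_le G hdom'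
      exact ⟨D', hdom', le_antisymm h1 h2, huv⟩
    · rintro ⟨D, hdom, hcard, huv⟩
      have hdomH : isDomSet (pathAdd G u v 1) (D.image Sum.inl) := by
        intro w hw
        match w with
        | Sum.inl a =>
          have haD : a ∉ D := fun e => hw (Finset.mem_image_of_mem _ e)
          obtain ⟨b, hbD, hadj⟩ := hdom a haD
          exact ⟨Sum.inl b, Finset.mem_image_of_mem _ hbD, (adj_inl_inl G u v b a).2 hadj⟩
        | Sum.inr i =>
          rcases huv with hu | hv
          · exact ⟨Sum.inl u, Finset.mem_image_of_mem _ hu,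
              (adj_inl_inr G u v u i).2 (Or.inl rfl)⟩
          · exact ⟨Sum.inl v, Finset.mem_image_of_mem _ hv,
              (adj_inl_inr G u v v i).2 (Or.inr rfl)⟩
      have : domNum (pathAdd G u v 1) ≤ domNum G := by
        calc domNum (pathAdd G u v 1) ≤ (D.image Sum.inl).card := domNum_le _ hdomH
          _ = D.card := Finset.card_image_of_injective _ Sum.inl_injective
          _ = domNum G := hcard
      exact le_antisymm this part1
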